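/- arXiv:1203.5973 — 2 statements merged into one kernel-verified Lean document; each statement's English description precedes it below -/
import Mathlib

section
/- (Cheeger-type bound) Let λ₁ be the first nonzero eigenvalue of −L_HS on a compact hypersurface S (closed or Dirichlet eigenvalue problem). Assuming the variational characterization λ₁ = inf ∫_S |grad_HS ψ|² dσ_H / ∫_S ψ² dσ_H over admissible ψ, and the characterization Isop(S) = inf ∫_S |grad_HS ψ| dσ_H / ∫_S |ψ| dσ_H, it follows that λ₁ ≥ (Isop(S))² / 4. -/
open MeasureTheory

/-- Cheeger-type bound: if `λ₁` is the infimum of the Rayleigh quotients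
`∫ |grad_HS ψ|² / ∫ ψ²` over admissible functions, and `Isop` satisfies the
Federer–Fleming characterization `Isop ∫|φ| ≤ ∫|grad_HS φ|` on admissible functions
(with squares of eigen-test-functions admissible and the chain rule holding), then
`λ₁ ≥ Isop² / 4`. -/
theorem stmt_8 {S : Type*} [MeasurableSpace S] (σ : Measure S)
    (grad : (S → ℝ) → S → ℝ)
    (T T' : Set (S → ℝ)) (hTne : T.Nonempty)
    (lam1 Isop : ℝ) (hIsopnn : 0 ≤ Isop)
    (hsq : ∀ ψ ∈ T, (fun s => ψ s ^ 2) ∈ T')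
    (hchain : ∀ ψ ∈ T, ∀ s, |grad (fun t => ψ t ^ 2) s| = 2 * |ψ s| * |grad ψ s|)
    (hint : ∀ ψ ∈ T, Integrable (fun s => ψ s ^ 2) σ ∧
      Integrable (fun s => (grad ψ s) ^ 2) σ ∧
      Integrable (fun s => |ψ s| * |grad ψ s|) σ)
    (hpos : ∀ ψ ∈ T, 0 < ∫ s, ψ s ^ 2 ∂σ)
    (hIsopChar : ∀ φ ∈ T', Isop * ∫ s, |φ s| ∂σ ≤ ∫ s, |grad φ s| ∂σ)
    (hlam : IsGLB
      ((fun ψ => (∫ s, (grad ψ s) ^ 2 ∂σ) / ∫ s, ψ s ^ 2 ∂σ) '' T) lam1) :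
    Isop ^ 2 / 4 ≤ lam1 := by
  refine hlam.2 ?_
  rintro x ⟨ψ, hψ, rfl⟩
  obtain ⟨hA, hG, hM⟩ := hint ψ hψ
  set A := ∫ s, ψ s ^ 2 ∂σ with hAdef
  set G := ∫ s, (grad ψ s) ^ 2 ∂σ with hGdef
  have hApos : 0 < A := hpos ψ hψ
  have hGnn : 0 ≤ G := integral_nonneg fun s => sq_nonneg _
  have habs : (∫ s, |ψ s ^ 2| ∂σ) = A := by
    simp only [abs_pow, sq_abs, hAdef]
  have hgradsq : (∫ s, |grad (fun t => ψ t ^ 2) s| ∂σ)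
      = 2 * ∫ s, |ψ s| * |grad ψ s| ∂σ := by
    rw [← integral_const_mul]
    congr 1
    funext s
    rw [hchain ψ hψ s, mul_assoc]
  have hkey : Isop * A ≤ 2 * ∫ s, |ψ s| * |grad ψ s| ∂σ := by
    have := hIsopChar _ (hsq ψ hψ)
    rwa [habs, hgradsq] at this
  rcases eq_or_lt_of_le hIsopnn with h0 | h0
  · have : Isop ^ 2 / 4 = 0 := by rw [← h0]; ring
    rw [this]
    exact div_nonneg hGnn hApos.le
  · have hptw : ∀ s, |ψ s| * |grad ψ s|
        ≤ Isop / 4 * ψ s ^ 2 + 1 / Isop * (grad ψ s) ^ 2 := by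
      intro s
      rw [← mul_le_mul_iff_right₀ h0]
      have hinv : Isop * (1 / Isop * (grad ψ s) ^ 2) = (grad ψ s) ^ 2 := by
        field_simp
      rw [mul_add, hinv, ← sq_abs (ψ s), ← sq_abs (grad ψ s)]
      nlinarith [sq_nonneg (Isop * |ψ s| - 2 * |grad ψ s|)]
    have ham : (∫ s, |ψ s| * |grad ψ s| ∂σ)
        ≤ Isop / 4 * A + 1 / Isop * G := by
      have hRint : Integrable
          (fun s => Isop / 4 * ψ s ^ 2 + 1 / Isop * (grad ψ s) ^ 2) σ :=
        (hA.const_mul _).add (hG.const_mul _)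
      have := integral_mono hM hRint hptw
      rwa [integral_add (hA.const_mul _) (hG.const_mul _),
        integral_const_mul, integral_const_mul] at this
    have hmul : Isop / 2 * A ≤ 2 / Isop * G := by
      have h2G : 2 * (1 / Isop * G) = 2 / Isop * G := by ring
      linarith
    have h9 : Isop / 2 * (Isop / 2 * A) ≤ Isop / 2 * (2 / Isop * G) :=
      mul_le_mul_of_nonneg_left hmul (by positivity)
    have h10 : Isop / 2 * (2 / Isop * G) = G := by
      field_simp
    rw [div_le_div_iff₀ (by norm_num) hApos]
    nlinarith [h9, h10]
end

section
/- Let S be a compact C² hypersurface with boundary in a Carnot group, and suppose ψ is a C² function on S, k ∈ ℝ is such that the sets {ψ ≥ k} and {ψ ≤ k} each have σ_H-measure at least σ_H(S)/2. Then ∫_S |ψ − k|² dσ_H ≤ (4 / Isop₀(S)²) ∫_S |grad_HS ψ|² dσ_H, where Isop₀(S) is the Neumann-type isoperimetric constant. Moreover, if ∫_S ψ dσ_H = 0, then ∫_S ψ² dσ_H ≤ (4 / Isop₀(S)²) ∫_S |grad_HS ψ|² dσ_H. -/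
open MeasureTheory

/-- Auxiliary: if `f₁, f₂ ≥ 0` pointwise, `f₁ + f₂ ≤ h` pointwise, and `h` is
integrable, then `∫ f₁ + ∫ f₂ ≤ ∫ h` (no measurability assumptions on `f₁, f₂`). -/
lemma stmt_9_aux {S : Type*} [MeasurableSpace S] (σ : Measure S)
    (f1 f2 h : S → ℝ) (h1 : ∀ s, 0 ≤ f1 s) (h2 : ∀ s, 0 ≤ f2 s)
    (hle : ∀ s, f1 s + f2 s ≤ h s) (hh : Integrable h σ) :
    ∫ s, f1 s ∂σ + ∫ s, f2 s ∂σ ≤ ∫ s, h s ∂σ := by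
  have key : ∀ f : S → ℝ, (∀ s, 0 ≤ f s) → (∀ s, f s ≤ h s) →
      ∫ s, f s ∂σ ≤ ∫ s, h s ∂σ := by
    intro f hf hfh
    by_cases hm : AEStronglyMeasurable f σ
    · exact integral_mono (hh.mono' hm (ae_of_all _ fun s => by
        rw [Real.norm_eq_abs, abs_of_nonneg (hf s)]; exact hfh s)) hh hfh
    · rw [integral_undef (fun hi => hm hi.1)]
      exact integral_nonneg fun s => le_trans (hf s) (hfh s)
  by_cases hm1 : AEStronglyMeasurable f1 σ
  · by_cases hm2 : AEStronglyMeasurable f2 σ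
    · have i1 : Integrable f1 σ := hh.mono' hm1 (ae_of_all _ fun s => by
        rw [Real.norm_eq_abs, abs_of_nonneg (h1 s)]
        linarith [hle s, h2 s])
      have i2 : Integrable f2 σ := hh.mono' hm2 (ae_of_all _ fun s => by
        rw [Real.norm_eq_abs, abs_of_nonneg (h2 s)]
        linarith [hle s, h1 s])
      rw [← integral_add i1 i2]
      exact integral_mono (i1.add i2) hh hle
    · rw [integral_undef (fun hi => hm2 hi.1), add_zero]
      exact key f1 h1 fun s => le_trans (le_add_of_nonneg_right (h2 s)) (hle s)
  · rw [integral_undef (fun hi => hm1 hi.1), zero_add]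
    exact key f2 h2 fun s => le_trans (le_add_of_nonneg_left (h1 s)) (hle s)

/-- Poincaré-type consequence of the Neumann isoperimetric constant: if `k` is a median
level for `ψ` and the Federer–Fleming inequality holds for (squares of) the truncations
`ψ⁺ = max{0, ψ−k}` and `ψ⁻ = −min{0, ψ−k}`, then
`∫ |ψ−k|² dσ ≤ (4 / Isop₀²) ∫ |grad_HS ψ|² dσ`; moreover if `∫ ψ dσ = 0` then
`∫ ψ² dσ ≤ (4 / Isop₀²) ∫ |grad_HS ψ|² dσ`. -/
theorem stmt_9 {S : Type*} [MeasurableSpace S] (σ : Measure S)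
    [IsFiniteMeasure σ]
    (grad : (S → ℝ) → S → ℝ) (ψ : S → ℝ) (k Isop0 : ℝ) (hI : 0 < Isop0)
    (hk1 : σ Set.univ / 2 ≤ σ {s | k ≤ ψ s})
    (hk2 : σ Set.univ / 2 ≤ σ {s | ψ s ≤ k})
    (hFF : ∀ φ ∈ ({fun s => max 0 (ψ s - k),
        fun s => -(min 0 (ψ s - k))} : Set (S → ℝ)),
      Isop0 * ∫ s, (φ s) ^ 2 ∂σ ≤ ∫ s, |grad (fun t => (φ t) ^ 2) s| ∂σ)
    (hchain : ∀ s,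
      |grad (fun t => (max 0 (ψ t - k)) ^ 2) s|
        + |grad (fun t => (-(min 0 (ψ t - k))) ^ 2) s|
        ≤ 2 * |ψ s - k| * |grad ψ s|)
    (hint1 : Integrable (fun s => (ψ s - k) ^ 2) σ)
    (hint2 : Integrable (fun s => (grad ψ s) ^ 2) σ)
    (hintψ : MemLp ψ 2 σ) :
    (∫ s, (ψ s - k) ^ 2 ∂σ ≤ 4 / Isop0 ^ 2 * ∫ s, (grad ψ s) ^ 2 ∂σ) ∧
    ((∫ s, ψ s ∂σ = 0) →
      ∫ s, ψ s ^ 2 ∂σ ≤ 4 / Isop0 ^ 2 * ∫ s, (grad ψ s) ^ 2 ∂σ) := by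
  set A := ∫ s, (ψ s - k) ^ 2 ∂σ with hA
  set B := ∫ s, (grad ψ s) ^ 2 ∂σ with hB
  have hBnn : 0 ≤ B := integral_nonneg fun s => sq_nonneg _
  -- measurability of ψ - k
  have hm : AEStronglyMeasurable (fun s => ψ s - k) σ :=
    hintψ.aestronglyMeasurable.sub aestronglyMeasurable_const
  have hm1 : AEStronglyMeasurable (fun s => (max 0 (ψ s - k)) ^ 2) σ := by
    have h : AEStronglyMeasurable (fun s => max 0 (ψ s - k)) σ :=
      aestronglyMeasurable_const.sup hm
    exact (h.mul h).congr (ae_of_all _ fun s => by simp [sq])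
  have hm2 : AEStronglyMeasurable (fun s => (-(min 0 (ψ s - k))) ^ 2) σ := by
    have h : AEStronglyMeasurable (fun s => -(min 0 (ψ s - k))) σ :=
      (aestronglyMeasurable_const.inf hm).neg
    exact (h.mul h).congr (ae_of_all _ fun s => by simp [sq])
  have iφ1 : Integrable (fun s => (max 0 (ψ s - k)) ^ 2) σ := by
    refine hint1.mono' hm1 (ae_of_all _ fun s => ?_)
    rw [Real.norm_eq_abs, abs_of_nonneg (sq_nonneg _)]
    rcases le_total 0 (ψ s - k) with h | h
    · rw [max_eq_right h]
    · rw [max_eq_left h]; simpa using sq_nonneg (ψ s - k)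
  have iφ2 : Integrable (fun s => (-(min 0 (ψ s - k))) ^ 2) σ := by
    refine hint1.mono' hm2 (ae_of_all _ fun s => ?_)
    rw [Real.norm_eq_abs, abs_of_nonneg (sq_nonneg _)]
    rcases le_total 0 (ψ s - k) with h | h
    · rw [min_eq_left h]; simpa using sq_nonneg (ψ s - k)
    · rw [min_eq_right h, neg_sq]
  have hsplit : (∫ s, (max 0 (ψ s - k)) ^ 2 ∂σ)
      + (∫ s, (-(min 0 (ψ s - k))) ^ 2 ∂σ) = A := by
    rw [← integral_add iφ1 iφ2, hA]
    refine integral_congr_ae (ae_of_all _ fun s => ?_)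
    show (max 0 (ψ s - k)) ^ 2 + (-(min 0 (ψ s - k))) ^ 2 = (ψ s - k) ^ 2
    rcases le_total 0 (ψ s - k) with h | h
    · rw [max_eq_right h, min_eq_left h]; ring
    · rw [max_eq_left h, min_eq_right h]; ring
  -- Federer–Fleming for both truncations
  have hFF1 := hFF _ (Set.mem_insert _ _)
  have hFF2 := hFF _ (Set.mem_insert_of_mem _ rfl)
  -- combine the two gradient integrals via the auxiliary lemma
  have hdom : ∫ s, |grad (fun t => (max 0 (ψ t - k)) ^ 2) s| ∂σ
      + ∫ s, |grad (fun t => (-(min 0 (ψ t - k))) ^ 2) s| ∂σ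
      ≤ ∫ s, (Isop0 / 2 * (ψ s - k) ^ 2 + 2 / Isop0 * (grad ψ s) ^ 2) ∂σ := by
    refine stmt_9_aux σ _ _ _ (fun s => abs_nonneg _) (fun s => abs_nonneg _)
      (fun s => ?_) ((hint1.const_mul _).add (hint2.const_mul _))
    have h1 := hchain s
    have hq : 0 ≤ Isop0 ^ 2 * (ψ s - k) ^ 2
        - 4 * Isop0 * (|ψ s - k| * |grad ψ s|) + 4 * (grad ψ s) ^ 2 := by
      nlinarith [sq_nonneg (Isop0 * |ψ s - k| - 2 * |grad ψ s|), sq_abs (ψ s - k),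
        sq_abs (grad ψ s)]
    have h2 : 2 * |ψ s - k| * |grad ψ s|
        ≤ Isop0 / 2 * (ψ s - k) ^ 2 + 2 / Isop0 * (grad ψ s) ^ 2 := by
      rw [← sub_nonneg]
      have heq : Isop0 / 2 * (ψ s - k) ^ 2 + 2 / Isop0 * (grad ψ s) ^ 2
          - 2 * |ψ s - k| * |grad ψ s|
          = (Isop0 ^ 2 * (ψ s - k) ^ 2
            - 4 * Isop0 * (|ψ s - k| * |grad ψ s|) + 4 * (grad ψ s) ^ 2)
            / (2 * Isop0) := by
        field_simp
        ring
      rw [heq]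
      exact div_nonneg hq (by positivity)
    linarith
  have hIntRHS : ∫ s, (Isop0 / 2 * (ψ s - k) ^ 2 + 2 / Isop0 * (grad ψ s) ^ 2) ∂σ
      = Isop0 / 2 * A + 2 / Isop0 * B := by
    rw [integral_add (hint1.const_mul _) (hint2.const_mul _),
      integral_const_mul, integral_const_mul]
  have key : Isop0 * A ≤ Isop0 / 2 * A + 2 / Isop0 * B := by
    calc Isop0 * A = Isop0 * ∫ s, (max 0 (ψ s - k)) ^ 2 ∂σ
          + Isop0 * ∫ s, (-(min 0 (ψ s - k))) ^ 2 ∂σ := by rw [← mul_add, hsplit]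
      _ ≤ ∫ s, |grad (fun t => (max 0 (ψ t - k)) ^ 2) s| ∂σ
          + ∫ s, |grad (fun t => (-(min 0 (ψ t - k))) ^ 2) s| ∂σ :=
            add_le_add hFF1 hFF2
      _ ≤ _ := hdom
      _ = _ := hIntRHS
  have part1 : A ≤ 4 / Isop0 ^ 2 * B := by
    have h2 : Isop0 / 2 * A ≤ 2 / Isop0 * B := by linarith
    have h3 := mul_le_mul_of_nonneg_left h2 hI.le
    have h4 : Isop0 * (2 / Isop0 * B) = 2 * B := by field_simp
    rw [div_mul_eq_mul_div, le_div_iff₀ (by positivity : (0:ℝ) < Isop0 ^ 2)]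
    nlinarith [h3, h4]
  refine ⟨part1, fun h0 => ?_⟩
  -- second part: ∫ψ² ≤ ∫(ψ-k)² when ∫ψ = 0
  have hψ1 : Integrable ψ σ := hintψ.integrable one_le_two
  have hψ2 : Integrable (fun s => ψ s ^ 2) σ := by
    have : Integrable (fun s => (ψ s - k) ^ 2 + (2 * k * ψ s - k ^ 2)) σ :=
      hint1.add ((hψ1.const_mul (2 * k)).sub (integrable_const (k ^ 2)))
    exact this.congr (ae_of_all _ fun s => by ring)
  have e2 : ∫ s, ((ψ s - k) ^ 2 - ψ s ^ 2) ∂σ = ∫ s, (k ^ 2 - 2 * k * ψ s) ∂σ := by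
    congr 1; funext s; ring
  have e3 : ∫ s, ((ψ s - k) ^ 2 - ψ s ^ 2) ∂σ = A - ∫ s, ψ s ^ 2 ∂σ :=
    integral_sub hint1 hψ2
  have e4 : ∫ s, (k ^ 2 - 2 * k * ψ s) ∂σ
      = (σ Set.univ).toReal * k ^ 2 - 2 * k * ∫ s, ψ s ∂σ := by
    rw [integral_sub (integrable_const _) (hψ1.const_mul _), integral_const,
      integral_const_mul, smul_eq_mul, Measure.real]
  have hnn : (0:ℝ) ≤ (σ Set.univ).toReal * k ^ 2 := by positivity
  rw [h0] at e4
  have : ∫ s, ψ s ^ 2 ∂σ ≤ A := by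
    have := e3.symm.trans (e2.trans e4)
    linarith
  linarith
end
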